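/- Let A be a p-torsion free ring with an endomorphism φ : A → A satisfying φ(x) ≡ x^p mod p. Define θ(x) = (φ(x) − x^p)/p. Then the map x ↦ x^{p−1} dx + dθ(x), from A to the module of Kähler differentials Ω¹_{A} regarded as an A-module via φ (i.e. a·λ := φ(a)λ), is a derivation: it is additive, and satisfies d̃(xy) = φ(x) d̃(y) + φ(y) d̃(x). -/
import Mathlib


open MvPolynomial

private lemma chain_rule' {A : Type} [CommRing A] (v : Fin 2 → A) (g : MvPolynomial (Fin 2) ℤ) :
    KaehlerDifferential.D ℤ A (MvPolynomial.aeval v g) =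
      MvPolynomial.aeval v (MvPolynomial.pderiv 0 g) • KaehlerDifferential.D ℤ A (v 0) +
      MvPolynomial.aeval v (MvPolynomial.pderiv 1 g) • KaehlerDifferential.D ℤ A (v 1) := by
  induction g using MvPolynomial.induction_on with
  | C a => simp
  | add f g hf hg => simp only [map_add, hf, hg, add_smul]; abel
  | mul_X f i hf =>
    rw [map_mul, MvPolynomial.aeval_X, Derivation.leibniz, hf]
    fin_cases i <;>
      simp [Derivation.leibniz, MvPolynomial.pderiv_X, smul_smul, smul_add, add_smul,
        mul_comm] <;> abel

private lemma exists_sigma' (p : ℕ) (hp : p.Prime) :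
    ∃ σ : MvPolynomial (Fin 2) ℤ,
      (p : MvPolynomial (Fin 2) ℤ) * σ = (X 0 + X 1) ^ p - X 0 ^ p - X 1 ^ p := by
  haveI : Fact p.Prime := ⟨hp⟩
  have h : (C (p : ℤ)) ∣ ((X 0 + X 1) ^ p - X 0 ^ p - X 1 ^ p : MvPolynomial (Fin 2) ℤ) := by
    rw [MvPolynomial.C_dvd_iff_map_hom_eq_zero (Int.castRingHom (ZMod p)) _
      (fun r' => ZMod.intCast_zmod_eq_zero_iff_dvd r' p)]
    simp only [map_sub, map_pow, map_add, map_X]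
    rw [add_pow_char]
    ring
  obtain ⟨σ, hσ⟩ := h
  refine ⟨σ, ?_⟩
  rw [show ((p : ℕ) : MvPolynomial (Fin 2) ℤ) = C ((p:ℕ) : ℤ) from (map_natCast C p).symm, ← hσ]


/-- The twisted derivation `x ↦ x^{p-1} d x + d θ(x)` into the absolute Kähler
differentials of `A`. -/
noncomputable def twistedD (p : ℕ) {A : Type} [CommRing A] (θ : A → A) (x : A) :
    Ω[A⁄ℤ] :=
  x ^ (p - 1) • KaehlerDifferential.D ℤ A x + KaehlerDifferential.D ℤ A (θ x)

/-- Let `A` be a `p`-torsion free ring with a Frobenius lift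
`φ` (i.e. `φ x ≡ x^p mod p`), and set `θ x = (φ x − x^p)/p`.  The map
`x ↦ x^{p−1} d x + d θ(x)` from `A` to `Ω¹_A`, regarded as an `A`-module via `φ`,
is a derivation: it is additive and satisfies
`d̃(xy) = φ(x) d̃(y) + φ(y) d̃(x)`. -/
theorem statement7
    (p : ℕ) (hp : p.Prime)
    (A : Type) [CommRing A]
    (htf : ∀ x : A, (p : A) * x = 0 → x = 0)
    (φ : A →+* A) (θ : A → A)
    (hθ : ∀ x, φ x = x ^ p + p * θ x) :
    (∀ x y : A, twistedD p θ (x + y) = twistedD p θ x + twistedD p θ y) ∧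
    (∀ x y : A, twistedD p θ (x * y) = φ x • twistedD p θ y + φ y • twistedD p θ x) := by
  obtain ⟨σ, hσ⟩ := exists_sigma' p hp
  have hpB : (p : MvPolynomial (Fin 2) ℤ) ≠ 0 := Nat.cast_ne_zero.mpr hp.ne_zero
  -- derivatives of σ
  have hd0 : pderiv 0 σ = (X 0 + X 1) ^ (p - 1) - X 0 ^ (p - 1) := by
    apply mul_left_cancel₀ hpB
    have h1 : (p : MvPolynomial (Fin 2) ℤ) * pderiv 0 σ = pderiv 0 ((p : MvPolynomial (Fin 2) ℤ) * σ) := by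
      rw [← nsmul_eq_mul, ← nsmul_eq_mul, map_nsmul]
    rw [h1, hσ]
    simp only [map_sub, Derivation.leibniz_pow, map_add, pderiv_X_self,
      pderiv_X_of_ne (by decide : (1 : Fin 2) ≠ 0), add_zero, smul_eq_mul, mul_one,
      nsmul_eq_mul]
    ring
  have hd1 : pderiv 1 σ = (X 0 + X 1) ^ (p - 1) - X 1 ^ (p - 1) := by
    apply mul_left_cancel₀ hpB
    have h1 : (p : MvPolynomial (Fin 2) ℤ) * pderiv 1 σ = pderiv 1 ((p : MvPolynomial (Fin 2) ℤ) * σ) := by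
      rw [← nsmul_eq_mul, ← nsmul_eq_mul, map_nsmul]
    rw [h1, hσ]
    simp only [map_sub, Derivation.leibniz_pow, map_add, pderiv_X_self,
      pderiv_X_of_ne (by decide : (0 : Fin 2) ≠ 1), zero_add, smul_eq_mul, mul_one,
      nsmul_eq_mul]
    ring
  have hx' : ∀ x : A, x ^ (p - 1) * x = x ^ p := by
    intro x
    rw [← pow_succ, Nat.sub_add_cancel hp.one_le]
  constructor
  · intro x y
    have hs : (p : A) * MvPolynomial.aeval ![x, y] σ = (x + y) ^ p - x ^ p - y ^ p := by
      have := congrArg (MvPolynomial.aeval ![x, y]) hσ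
      simpa [map_sub, map_pow, map_add] using this
    have hDs : KaehlerDifferential.D ℤ A (MvPolynomial.aeval ![x, y] σ) =
        ((x + y) ^ (p - 1) - x ^ (p - 1)) • KaehlerDifferential.D ℤ A x +
        ((x + y) ^ (p - 1) - y ^ (p - 1)) • KaehlerDifferential.D ℤ A y := by
      have := chain_rule' ![x, y] σ
      rw [hd0, hd1] at this
      simpa [map_sub, map_pow, map_add] using this
    have hθadd : θ (x + y) = θ x + θ y - MvPolynomial.aeval ![x, y] σ := by
      have h2 : φ (x + y) = φ x + φ y := map_add φ x y
      rw [hθ, hθ, hθ] at h2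
      have h3 : (p : A) * (θ (x + y) - (θ x + θ y - MvPolynomial.aeval ![x, y] σ)) = 0 := by
        linear_combination h2 + hs
      exact sub_eq_zero.mp (htf _ h3)
    show (x + y) ^ (p - 1) • KaehlerDifferential.D ℤ A (x + y) +
        KaehlerDifferential.D ℤ A (θ (x + y)) = _
    rw [hθadd, map_sub, map_add, map_add, hDs]
    show _ = (x ^ (p - 1) • KaehlerDifferential.D ℤ A x + KaehlerDifferential.D ℤ A (θ x)) +
        (y ^ (p - 1) • KaehlerDifferential.D ℤ A y + KaehlerDifferential.D ℤ A (θ y))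
    module
  · intro x y
    have hθmul : θ (x * y) = x ^ p * θ y + y ^ p * θ x + (p : A) * (θ x * θ y) := by
      have h2 : φ (x * y) = φ x * φ y := map_mul φ x y
      rw [hθ, hθ, hθ] at h2
      have h3 : (p : A) * (θ (x * y) - (x ^ p * θ y + y ^ p * θ x + (p : A) * (θ x * θ y))) = 0 := by
        linear_combination h2
      have := htf _ h3
      exact sub_eq_zero.mp this
    simp only [twistedD]
    rw [hθmul, hθ x, hθ y]
    simp only [map_add, Derivation.leibniz, Derivation.leibniz_pow, map_natCast,
      Derivation.map_natCast]
    match_scalars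
    · linear_combination y ^ (p - 1) * hx' x
    · linear_combination x ^ (p - 1) * hx' y
    · ring
    · ring
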